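/- Let p ≥ 2 and let φ be a holomorphic self-map of the unit disc with nontangential boundary values φ* a.e. on the circle. Define the level sets E_φ(s) = {ζ ∈ 𝕋 : |φ*(ζ)| ≥ s} and the pull-back measure m_φ(B) = |{ζ ∈ 𝕋 : φ*(ζ) ∈ B}| for Borel B ⊆ closure(𝔻). For the dyadic Carleson boxes W_{n,j} = {z ∈ 𝔻 : 1-2^{-n} ≤ |z| < 1, 2πj/2^n ≤ arg z < 2π(j+1)/2^n}, j = 0,…,2^n - 1, if ∫₀¹ |E_φ(s)|^{p/2}/(1-s)^{1+p/2} ds < ∞, then ∑_n 2^{np/2} ∑_{j=0}^{2^n-1} m_φ(W_{n,j})^{p/2} < ∞. -/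

import Mathlib

open Real Complex MeasureTheory Filter
open scoped NNReal

/-- Argument of `z` normalized to lie in `[0, 2π)`. -/
noncomputable def argIn (z : ℂ) : ℝ :=
  if 0 ≤ Complex.arg z then Complex.arg z else Complex.arg z + 2*π

/-- The dyadic Carleson box `W_{n,j}`. -/
def dyadicBox (n j : ℕ) : Set ℂ :=
  {z : ℂ | ‖z‖ < 1 ∧ 1 - (1/2:ℝ)^n ≤ ‖z‖ ∧
    2*π*j/2^n ≤ argIn z ∧ argIn z < 2*π*(j+1)/2^n}

lemma aux_add_rpow {q : ℝ} (hq : 1 ≤ q) {x y : ℝ} (hx : 0 ≤ x) (hy : 0 ≤ y) :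
    x ^ q + y ^ q ≤ (x + y) ^ q := by
  have h := NNReal.add_rpow_le_rpow_add (⟨x, hx⟩ : ℝ≥0) ⟨y, hy⟩ hq
  have h2 := NNReal.coe_le_coe.2 h
  exact h2

lemma aux_sum_rpow {ι : Type*} (s : Finset ι) (f : ι → ℝ) (hf : ∀ i ∈ s, 0 ≤ f i)
    {q : ℝ} (hq : 1 ≤ q) : ∑ i ∈ s, f i ^ q ≤ (∑ i ∈ s, f i) ^ q := by
  induction s using Finset.cons_induction with
  | empty => simp [Real.zero_rpow (by positivity : q ≠ 0)]
  | cons a s ha ih =>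
    rw [Finset.sum_cons, Finset.sum_cons]
    have h0 : 0 ≤ f a := hf a (Finset.mem_cons_self _ _)
    have h1 : 0 ≤ ∑ i ∈ s, f i :=
      Finset.sum_nonneg fun i hi => hf i (Finset.mem_cons_of_mem hi)
    calc f a ^ q + ∑ i ∈ s, f i ^ q
        ≤ f a ^ q + (∑ i ∈ s, f i) ^ q := by
          exact add_le_add le_rfl (ih fun i hi => hf i (Finset.mem_cons_of_mem hi))
      _ ≤ (f a + ∑ i ∈ s, f i) ^ q := aux_add_rpow hq h0 h1

lemma measurable_argIn : Measurable argIn := by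
  unfold argIn
  exact Measurable.ite (measurableSet_le measurable_const Complex.measurable_arg)
    Complex.measurable_arg (Complex.measurable_arg.add_const _)

lemma measurableSet_dyadicBox (n j : ℕ) : MeasurableSet (dyadicBox n j) := by
  unfold dyadicBox
  refine MeasurableSet.inter ?_ (MeasurableSet.inter ?_ (MeasurableSet.inter ?_ ?_))
  · exact measurableSet_lt measurable_norm measurable_const
  · exact measurableSet_le measurable_const measurable_norm
  · exact measurableSet_le measurable_const measurable_argIn
  · exact measurableSet_lt measurable_argIn measurable_const

lemma dyadicBox_disjoint (n : ℕ) : ∀ {j j' : ℕ}, j < j' →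
    Disjoint (dyadicBox n j) (dyadicBox n j') := by
  intro j j' hjj'
  rw [Set.disjoint_left]
  rintro z ⟨-, -, -, h2⟩ ⟨-, -, h3, -⟩
  have hπ : (0:ℝ) < π := Real.pi_pos
  have : 2*π*(j+1)/2^n ≤ 2*π*j'/2^n := by
    have : ((j:ℝ)+1) ≤ (j':ℝ) := by exact_mod_cast hjj'
    gcongr
  linarith

lemma dyadicBox_norm {n j : ℕ} {z : ℂ} (hz : z ∈ dyadicBox n j) :
    1 - (1/2:ℝ)^n ≤ ‖z‖ := hz.2.1

lemma aux_half_rpow (k : ℕ) : ((1/2:ℝ))^k = (2:ℝ)^(-(k:ℝ)) := by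
  rw [Real.rpow_neg (by norm_num), Real.rpow_natCast, one_div, inv_pow]

lemma aux_arith (q : ℝ) (n : ℕ) (X : ℝ) :
    (2:ℝ)^(q+1) * ((1/2:ℝ)^(n+1) * (X / ((1/2:ℝ)^n)^(1+q))) = (2:ℝ)^(((n:ℝ)+1)*q) * X := by
  have h2 : (0:ℝ) ≤ 2 := by norm_num
  have e1 : (((1/2:ℝ))^n : ℝ)^(1+q) = (2:ℝ)^(-((n:ℝ)*(1+q))) := by
    rw [aux_half_rpow, ← Real.rpow_mul h2]
    ring_nf
  have e2 : ((1/2:ℝ))^(n+1) = (2:ℝ)^(-((n:ℝ)+1)) := by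
    rw [aux_half_rpow]; push_cast; ring_nf
  rw [e1, e2, div_eq_mul_inv, ← Real.rpow_neg h2, neg_neg]
  calc (2:ℝ)^(q+1) * ((2:ℝ)^(-((n:ℝ)+1)) * (X * (2:ℝ)^((n:ℝ)*(1+q))))
      = (2:ℝ)^(q+1) * (2:ℝ)^(-((n:ℝ)+1)) * (2:ℝ)^((n:ℝ)*(1+q)) * X := by ring
    _ = (2:ℝ)^((q+1) + -((n:ℝ)+1) + (n:ℝ)*(1+q)) * X := by
        rw [← Real.rpow_add (by norm_num : (0:ℝ) < 2), ← Real.rpow_add (by norm_num : (0:ℝ) < 2)]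
    _ = (2:ℝ)^(((n:ℝ)+1)*q) * X := by congr 1; ring

lemma aux_summable (q : ℝ) (hq : 1 ≤ q) (E : ℝ → ℝ) (hE0 : ∀ s, 0 ≤ E s)
    (hmono : ∀ ⦃s s' : ℝ⦄, s ≤ s' → E s' ≤ E s)
    (hint : IntegrableOn (fun s => E s ^ q / (1-s)^(1+q)) (Set.Ioo (0:ℝ) 1))
    (S : ℕ → ℝ) (hS0 : ∀ n, 0 ≤ S n) (hSle : ∀ n, S n ≤ E (1-(1/2:ℝ)^n) ^ q) :
    Summable (fun n : ℕ => (2:ℝ)^((n:ℝ)*q) * S n) := by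
  have hq0 : 0 ≤ q := le_trans zero_le_one hq
  set f : ℝ → ℝ := fun s => E s ^ q / (1-s)^(1+q) with hfdef
  have hhalf_le_one : ∀ n : ℕ, ((1/2:ℝ))^n ≤ 1 :=
    fun n => pow_le_one₀ (by norm_num) (by norm_num)
  have hhalf_pos : ∀ n : ℕ, (0:ℝ) < (1/2:ℝ)^n := fun n => by positivity
  have hK : ∀ n : ℕ, Set.Ioc (1-(1/2:ℝ)^n) (1-(1/2:ℝ)^(n+1)) ⊆ Set.Ioo (0:ℝ) 1 := by
    intro n s hs
    obtain ⟨h1, h2⟩ := hs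
    constructor
    · have := hhalf_le_one n; linarith
    · have := hhalf_pos (n+1); linarith
  have hmono_pow : ∀ {m n : ℕ}, m ≤ n → ((1/2:ℝ))^n ≤ ((1/2:ℝ))^m :=
    fun {m n} h => pow_le_pow_of_le_one (by norm_num) (by norm_num) h
  have hdisj : Pairwise (Function.onFun Disjoint
      (fun n : ℕ => Set.Ioc (1-(1/2:ℝ)^n) (1-(1/2:ℝ)^(n+1)))) := by
    intro m n hmn
    rcases hmn.lt_or_gt with h | h
    · have hle : (1-(1/2:ℝ)^(m+1)) ≤ (1-(1/2:ℝ)^n) := by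
        have h2 : ((1/2:ℝ))^n ≤ (1/2:ℝ)^(m+1) := hmono_pow h
        linarith
      exact Set.Ioc_disjoint_Ioc.2
        (le_trans (min_le_left _ _) (le_trans hle (le_max_right _ _)))
    · have hle : (1-(1/2:ℝ)^(n+1)) ≤ (1-(1/2:ℝ)^m) := by
        have h2 : ((1/2:ℝ))^m ≤ (1/2:ℝ)^(n+1) := hmono_pow h
        linarith
      exact Set.Ioc_disjoint_Ioc.2
        (le_trans (min_le_right _ _) (le_trans hle (le_max_left _ _)))
  have hintU : IntegrableOn f (⋃ n : ℕ, Set.Ioc (1-(1/2:ℝ)^n) (1-(1/2:ℝ)^(n+1))) volume :=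
    hint.mono_set (Set.iUnion_subset hK)
  have hgsum : Summable (fun n : ℕ =>
      ∫ s in Set.Ioc (1-(1/2:ℝ)^n) (1-(1/2:ℝ)^(n+1)), f s) :=
    (hasSum_integral_iUnion (fun _ => measurableSet_Ioc) hdisj hintU).summable
  have hlow : ∀ n : ℕ,
      (1/2:ℝ)^(n+1) * (E (1-(1/2:ℝ)^(n+1)) ^ q / ((1/2:ℝ)^n)^(1+q))
        ≤ ∫ s in Set.Ioc (1-(1/2:ℝ)^n) (1-(1/2:ℝ)^(n+1)), f s := by
    intro n
    set c : ℝ := E (1-(1/2:ℝ)^(n+1)) ^ q / ((1/2:ℝ)^n)^(1+q) with hcdef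
    have hIo : IntegrableOn f (Set.Ioc (1-(1/2:ℝ)^n) (1-(1/2:ℝ)^(n+1))) volume :=
      hint.mono_set (hK n)
    have hconst : IntegrableOn (fun _ : ℝ => c)
        (Set.Ioc (1-(1/2:ℝ)^n) (1-(1/2:ℝ)^(n+1))) volume :=
      integrableOn_const measure_Ioc_lt_top.ne
    have hpt : ∀ s ∈ Set.Ioc (1-(1/2:ℝ)^n) (1-(1/2:ℝ)^(n+1)), c ≤ f s := by
      intro s hs
      obtain ⟨h1, h2⟩ := hs
      have h1s_pos : 0 < 1 - s := by have := hhalf_pos (n+1); linarith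
      have h1s_le : 1 - s ≤ ((1/2:ℝ))^n := by linarith
      exact div_le_div₀ (Real.rpow_nonneg (hE0 _) _)
        (Real.rpow_le_rpow (hE0 _) (hmono h2) hq0)
        (Real.rpow_pos_of_pos h1s_pos _)
        (Real.rpow_le_rpow h1s_pos.le h1s_le (by linarith))
    have h := setIntegral_mono_on hconst hIo measurableSet_Ioc hpt
    rw [setIntegral_const, measureReal_def, Real.volume_Ioc, ENNReal.toReal_ofReal (by
      have := hhalf_pos (n+1); have : ((1/2:ℝ))^(n+1) ≤ (1/2:ℝ)^n := hmono_pow (Nat.le_succ n)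
      linarith), smul_eq_mul] at h
    have heq : (1-(1/2:ℝ)^(n+1)) - (1-(1/2:ℝ)^n) = (1/2:ℝ)^(n+1) := by
      rw [pow_succ]; ring
    rwa [heq] at h
  have hmain : ∀ n : ℕ, (2:ℝ)^(((n:ℝ)+1)*q) * S (n+1)
      ≤ (2:ℝ)^(q+1) * ∫ s in Set.Ioc (1-(1/2:ℝ)^n) (1-(1/2:ℝ)^(n+1)), f s := by
    intro n
    calc (2:ℝ)^(((n:ℝ)+1)*q) * S (n+1)
        ≤ (2:ℝ)^(((n:ℝ)+1)*q) * (E (1-(1/2:ℝ)^(n+1)) ^ q) := by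
          refine mul_le_mul_of_nonneg_left ?_ (Real.rpow_nonneg (by norm_num) _)
          have := hSle (n+1)
          simpa using this
      _ = (2:ℝ)^(q+1) * ((1/2:ℝ)^(n+1) *
            (E (1-(1/2:ℝ)^(n+1)) ^ q / ((1/2:ℝ)^n)^(1+q))) := (aux_arith q n _).symm
      _ ≤ (2:ℝ)^(q+1) * ∫ s in Set.Ioc (1-(1/2:ℝ)^n) (1-(1/2:ℝ)^(n+1)), f s :=
          mul_le_mul_of_nonneg_left (hlow n) (Real.rpow_nonneg (by norm_num) _)
  refine (summable_nat_add_iff 1).1 (Summable.of_nonneg_of_le ?_ ?_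
    (hgsum.mul_left ((2:ℝ)^(q+1))))
  · intro n
    exact mul_nonneg (Real.rpow_nonneg (by norm_num) _) (hS0 _)
  · intro n
    have := hmain n
    have hcast : ((n+1 : ℕ) : ℝ) = (n:ℝ) + 1 := by push_cast; ring
    rw [hcast]
    exact this
theorem stmt7 (p : ℝ) (hp : 2 ≤ p) (φ : ℂ → ℂ)
    (hφ : DifferentiableOn ℂ φ (Metric.ball (0:ℂ) 1))
    (hφself : ∀ z ∈ Metric.ball (0:ℂ) 1, φ z ∈ Metric.ball (0:ℂ) 1)
    (φs : ℝ → ℂ)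
    (hbd : ∀ᵐ (t : ℝ) ∂(volume.restrict (Set.Ico (0:ℝ) (2*π))),
      Tendsto (fun r : ℝ => φ (r * Complex.exp (Complex.I * (t:ℂ))))
        (nhdsWithin 1 (Set.Iio 1)) (nhds (φs t)))
    (hint : IntegrableOn
      (fun s : ℝ =>
        ((volume {t ∈ Set.Ico (0:ℝ) (2*π) | s ≤ ‖φs t‖}).toReal / (2*π)) ^ (p/2)
          / (1 - s) ^ (1 + p/2))
      (Set.Ioo (0:ℝ) 1)) :
    Summable (fun n : ℕ => (2:ℝ) ^ ((n:ℝ) * p/2) *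
      ∑ j ∈ Finset.range (2^n),
        ((volume {t ∈ Set.Ico (0:ℝ) (2*π) | φs t ∈ dyadicBox n j}).toReal / (2*π))
          ^ (p/2)) := by
  have hπ : (0:ℝ) < π := Real.pi_pos
  have hq : 1 ≤ p/2 := by linarith
  -- a.e. measurability of φs
  have hrk : ∀ k : ℕ, |1 - 1/((k:ℝ)+2)| < 1 := by
    intro k
    have h1 : 0 < 1/((k:ℝ)+2) := by positivity
    have h2 : 1/((k:ℝ)+2) ≤ 1/2 := by
      gcongr
      all_goals nlinarith [(Nat.cast_nonneg k : (0:ℝ) ≤ k)]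
    rw [abs_lt]; constructor <;> linarith
  have hmeasF : ∀ k : ℕ, Measurable fun t : ℝ =>
      φ (((1 - 1/((k:ℝ)+2) : ℝ) : ℂ) * Complex.exp (Complex.I * (t:ℂ))) := by
    intro k
    have hcont : Continuous fun t : ℝ =>
        ((1 - 1/((k:ℝ)+2) : ℝ) : ℂ) * Complex.exp (Complex.I * (t:ℂ)) := by
      fun_prop
    have hmem : ∀ t : ℝ,
        ((1 - 1/((k:ℝ)+2) : ℝ) : ℂ) * Complex.exp (Complex.I * (t:ℂ)) ∈ Metric.ball (0:ℂ) 1 := by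
      intro t
      rw [Metric.mem_ball, dist_zero_right, norm_mul, Complex.norm_real, Real.norm_eq_abs]
      have hexp : ‖Complex.exp (Complex.I * (t:ℂ))‖ = 1 := by
        rw [Complex.norm_exp]
        simp [Complex.mul_re]
      rw [hexp, mul_one]
      exact hrk k
    exact (hφ.continuousOn.comp_continuous hcont hmem).measurable
  have hseq : Tendsto (fun k : ℕ => (1 - 1/((k:ℝ)+2))) atTop (nhdsWithin 1 (Set.Iio 1)) := by
    apply tendsto_nhdsWithin_of_tendsto_nhds_of_eventually_within
    · have h1 : Tendsto (fun k : ℕ => ((k:ℝ)+2)) atTop atTop :=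
        tendsto_atTop_add_const_right _ 2 tendsto_natCast_atTop_atTop
      have h3 : Tendsto (fun k : ℕ => 1 - ((k:ℝ)+2)⁻¹) atTop (nhds (1 - 0)) :=
        tendsto_const_nhds.sub h1.inv_tendsto_atTop
      simpa [one_div] using h3
    · filter_upwards with k
      have h1 : 0 < 1/((k:ℝ)+2) := by positivity
      simp only [Set.mem_Iio]; linarith
  have haem : AEMeasurable φs (volume.restrict (Set.Ico (0:ℝ) (2*π))) := by
    refine aemeasurable_of_tendsto_metrizable_ae atTop
      (fun k => (hmeasF k).aemeasurable) ?_
    filter_upwards [hbd] with t ht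
    exact ht.comp hseq
  set μr := volume.restrict (Set.Ico (0:ℝ) (2*π)) with hμr
  set g : ℝ → ℂ := haem.mk φs with hgdef
  have hgmeas : Measurable g := haem.measurable_mk
  have hae : φs =ᵐ[μr] g := haem.ae_eq_mk
  have hvol : ∀ B : Set ℂ, volume {t ∈ Set.Ico (0:ℝ) (2*π) | φs t ∈ B}
      = μr (φs ⁻¹' B) := by
    intro B
    rw [hμr, Measure.restrict_apply' measurableSet_Ico]
    congr 1
    ext t
    simp only [Set.mem_sep_iff, Set.mem_inter_iff, Set.mem_preimage]
    tauto
  have hcong : ∀ B : Set ℂ, μr (φs ⁻¹' B) = μr (g ⁻¹' B) := by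
    intro B
    apply measure_congr
    rw [Filter.eventuallyEq_set]
    filter_upwards [hae] with t ht
    simp [Set.mem_preimage, ht]
  have hfinlt : ∀ A : Set ℝ, μr A ≠ ⊤ := by
    intro A
    refine ne_of_lt (lt_of_le_of_lt (measure_mono (Set.subset_univ A)) ?_)
    rw [hμr, Measure.restrict_apply_univ, Real.volume_Ico]
    exact ENNReal.ofReal_lt_top
  have hfinE : ∀ A : Set ℝ, A ⊆ Set.Ico (0:ℝ) (2*π) → volume A ≠ ⊤ := by
    intro A hA
    refine ne_of_lt (lt_of_le_of_lt (measure_mono hA) ?_)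
    rw [Real.volume_Ico]
    exact ENNReal.ofReal_lt_top
  have hfin2 : ∀ n j : ℕ, volume {t ∈ Set.Ico (0:ℝ) (2*π) | φs t ∈ dyadicBox n j} ≠ ⊤ :=
    fun n j => hfinE _ (Set.sep_subset _ _)
  -- key measure inequality
  have key : ∀ n : ℕ, ∑ j ∈ Finset.range (2^n),
      volume {t ∈ Set.Ico (0:ℝ) (2*π) | φs t ∈ dyadicBox n j}
      ≤ volume {t ∈ Set.Ico (0:ℝ) (2*π) | (1 - (1/2:ℝ)^n) ≤ ‖φs t‖} := by
    intro n
    have h1 : ∀ j ∈ Finset.range (2^n),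
        volume {t ∈ Set.Ico (0:ℝ) (2*π) | φs t ∈ dyadicBox n j}
        = μr (g ⁻¹' dyadicBox n j) :=
      fun j _ => by rw [hvol, hcong]
    have hpd : (↑(Finset.range (2^n)) : Set ℕ).PairwiseDisjoint
        (fun j => g ⁻¹' dyadicBox n j) := by
      intro j hj j' hj' hne
      rcases hne.lt_or_gt with h | h
      · exact (dyadicBox_disjoint n h).preimage g
      · exact ((dyadicBox_disjoint n h).symm).preimage g
    rw [Finset.sum_congr rfl h1,
      ← measure_biUnion_finset hpd (fun j _ => hgmeas (measurableSet_dyadicBox n j))]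
    have hsub : (⋃ j ∈ Finset.range (2^n), g ⁻¹' dyadicBox n j)
        ⊆ g ⁻¹' {z : ℂ | 1 - (1/2:ℝ)^n ≤ ‖z‖} := by
      intro t ht
      simp only [Set.mem_iUnion, Set.mem_preimage] at ht ⊢
      obtain ⟨j, _, hj⟩ := ht
      exact dyadicBox_norm hj
    calc μr (⋃ j ∈ Finset.range (2^n), g ⁻¹' dyadicBox n j)
        ≤ μr (g ⁻¹' {z : ℂ | 1 - (1/2:ℝ)^n ≤ ‖z‖}) := measure_mono hsub
      _ = μr (φs ⁻¹' {z : ℂ | 1 - (1/2:ℝ)^n ≤ ‖z‖}) := (hcong _).symm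
      _ = volume {t ∈ Set.Ico (0:ℝ) (2*π) | (1 - (1/2:ℝ)^n) ≤ ‖φs t‖} := (hvol _).symm
  -- real version
  have keyR : ∀ n : ℕ, ∑ j ∈ Finset.range (2^n),
      (volume {t ∈ Set.Ico (0:ℝ) (2*π) | φs t ∈ dyadicBox n j}).toReal / (2*π)
      ≤ (volume {t ∈ Set.Ico (0:ℝ) (2*π) | (1-(1/2:ℝ)^n) ≤ ‖φs t‖}).toReal / (2*π) := by
    intro n
    rw [← Finset.sum_div]
    gcongr
    rw [← ENNReal.toReal_sum (fun j _ => hfin2 n j)]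
    exact ENNReal.toReal_mono (hfinE _ (Set.sep_subset _ _)) (key n)
  have hgoal := aux_summable (p/2) hq
    (fun s => (volume {t ∈ Set.Ico (0:ℝ) (2*π) | s ≤ ‖φs t‖}).toReal / (2*π))
    (fun s => by positivity)
    (fun s s' hss' => by
      have hsub : {t ∈ Set.Ico (0:ℝ) (2*π) | s' ≤ ‖φs t‖}
          ⊆ {t ∈ Set.Ico (0:ℝ) (2*π) | s ≤ ‖φs t‖} :=
        fun t ht => ⟨ht.1, le_trans hss' ht.2⟩
      gcongr
      all_goals first
        | exact hfinE _ (Set.sep_subset _ _)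
        | exact measure_mono hsub)
    hint
    (fun n => ∑ j ∈ Finset.range (2^n),
      ((volume {t ∈ Set.Ico (0:ℝ) (2*π) | φs t ∈ dyadicBox n j}).toReal / (2*π)) ^ (p/2))
    (fun n => Finset.sum_nonneg fun j _ => Real.rpow_nonneg (by positivity) _)
    (fun n => le_trans (aux_sum_rpow _ _ (fun j _ => by positivity) hq)
      (Real.rpow_le_rpow (Finset.sum_nonneg fun j _ => by positivity) (keyR n) (by linarith)))
  simpa [mul_div_assoc] using hgoal
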